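/- Let x₁ = v and consider the quadratic equation in x: Σ_α [((x+j_α)/(v+j_α))X_α + ((x+j_β)(x+j_γ))/((v+j_β)(v+j_γ))·Y_α] = 0, under the constraint Σ_α (X_α + Y_α) = 0. Then x = v is a root, and the second root x₂ equals (a·v + b)/(c·v + d) where a = Σ j_α X_α, b = -Σ(j_β j_γ X_α + j_α(j_β+j_γ)Y_α), c = Σ Y_α, d = Σ j_α Y_α (assuming the leading coefficient and cv+d are nonzero and all v+j_α ≠ 0). -/

import Mathlib

/-- The quadratic (in `x`) obtained from
`Σ_α ((x+j_α)/(v+j_α)) X_α + ((x+j_β)(x+j_γ))/((v+j_β)(v+j_γ)) Y_α = 0`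
by clearing denominators (multiplying by `(v+j₁)(v+j₂)(v+j₃)`):
`x = v` is a root, the Möbius image `x₂ = (av+b)/(cv+d)` is a root, and the
Viète product formula identifies `x₂` as the second root. -/
theorem second_root_moebius (v j1 j2 j3 X1 X2 X3 Y1 Y2 Y3 a b c d : ℂ)
    (h1 : v + j1 ≠ 0) (h2 : v + j2 ≠ 0) (h3 : v + j3 ≠ 0)
    (hconstr : (X1 + Y1) + (X2 + Y2) + (X3 + Y3) = 0)
    (ha : a = j1 * X1 + j2 * X2 + j3 * X3)
    (hb : b = -((j2 * j3 * X1 + j1 * (j2 + j3) * Y1)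
        + (j3 * j1 * X2 + j2 * (j3 + j1) * Y2)
        + (j1 * j2 * X3 + j3 * (j1 + j2) * Y3)))
    (hc : c = Y1 + Y2 + Y3)
    (hd : d = j1 * Y1 + j2 * Y2 + j3 * Y3)
    (Q : ℂ → ℂ)
    (hQ : Q = fun x =>
      ((x + j1) * (v + j2) * (v + j3) * X1
        + (x + j2) * (x + j3) * (v + j1) * Y1)
      + ((x + j2) * (v + j3) * (v + j1) * X2
        + (x + j3) * (x + j1) * (v + j2) * Y2)
      + ((x + j3) * (v + j1) * (v + j2) * X3
        + (x + j1) * (x + j2) * (v + j3) * Y3))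
    (hlead : (v + j1) * Y1 + (v + j2) * Y2 + (v + j3) * Y3 ≠ 0)
    (hcd : c * v + d ≠ 0) :
    Q v = 0 ∧
    Q ((a * v + b) / (c * v + d)) = 0 ∧
    ((v + j1) * Y1 + (v + j2) * Y2 + (v + j3) * Y3)
        * (v * ((a * v + b) / (c * v + d))) = Q 0 := by
  subst ha hb hc hd hQ
  have key : ∀ x : ℂ,
      (((x + j1) * (v + j2) * (v + j3) * X1
        + (x + j2) * (x + j3) * (v + j1) * Y1)
      + ((x + j2) * (v + j3) * (v + j1) * X2
        + (x + j3) * (x + j1) * (v + j2) * Y2)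
      + ((x + j3) * (v + j1) * (v + j2) * X3
        + (x + j1) * (x + j2) * (v + j3) * Y3))
      = (x - v) * (((Y1 + Y2 + Y3) * v + (j1 * Y1 + j2 * Y2 + j3 * Y3)) * x
          - ((j1 * X1 + j2 * X2 + j3 * X3) * v
            + -((j2 * j3 * X1 + j1 * (j2 + j3) * Y1)
              + (j3 * j1 * X2 + j2 * (j3 + j1) * Y2)
              + (j1 * j2 * X3 + j3 * (j1 + j2) * Y3)))) := by
    intro x
    linear_combination ((v^2 + v*(j1+j2+j3))*x + v*(j1*j2+j2*j3+j3*j1) + j1*j2*j3) * hconstr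
  set A := (j1 * X1 + j2 * X2 + j3 * X3) * v
      + -((j2 * j3 * X1 + j1 * (j2 + j3) * Y1)
        + (j3 * j1 * X2 + j2 * (j3 + j1) * Y2)
        + (j1 * j2 * X3 + j3 * (j1 + j2) * Y3)) with hA
  set C := (Y1 + Y2 + Y3) * v + (j1 * Y1 + j2 * Y2 + j3 * Y3) with hC
  refine ⟨by beta_reduce; rw [key]; ring, ?_, ?_⟩
  · beta_reduce
    rw [key]
    have : C * (A / C) - A = 0 := by field_simp; ring
    linear_combination (A / C - v) * this
  · beta_reduce
    rw [key]
    have hC' : C ≠ 0 := hcd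
    field_simp
    ring
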